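/- For the Hamiltonian H = h₁ − h₂ + V(q₁,q₂) with hₐ = ½(pₐ² + qₐ²), the function G = h₁ + h₂ + (p₁q₂ + p₂q₁)² + W(q₁,q₂) satisfies {H,G} = 0 if and only if ∂₁W = (1 + 2q₂²)∂₁V + 2q₁q₂∂₂V and −∂₂W = (1 + 2q₁²)∂₂V + 2q₁q₂∂₁V. -/

import Mathlib

/-- Canonical Poisson bracket of two functions on `ℝ⁴` with coordinates
`(q₁, q₂, p₁, p₂) = (x 0, x 1, x 2, x 3)`. -/
noncomputable def poissonBracket (F G : (Fin 4 → ℝ) → ℝ) (x : Fin 4 → ℝ) : ℝ :=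
  fderiv ℝ F x (Pi.single 0 1) * fderiv ℝ G x (Pi.single 2 1)
    + fderiv ℝ F x (Pi.single 1 1) * fderiv ℝ G x (Pi.single 3 1)
    - fderiv ℝ F x (Pi.single 2 1) * fderiv ℝ G x (Pi.single 0 1)
    - fderiv ℝ F x (Pi.single 3 1) * fderiv ℝ G x (Pi.single 1 1)

set_option maxHeartbeats 1000000 in
open ContinuousLinearMap in
lemma key (V W : ℝ × ℝ → ℝ) (hV : ContDiff ℝ 1 V) (hW : ContDiff ℝ 1 W) (x : Fin 4 → ℝ) :
    poissonBracket
      (fun x => (x 2 ^ 2 + x 0 ^ 2) / 2 - (x 3 ^ 2 + x 1 ^ 2) / 2 + V (x 0, x 1))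
      (fun x => (x 2 ^ 2 + x 0 ^ 2 + x 3 ^ 2 + x 1 ^ 2) / 2
        + (x 2 * x 1 + x 3 * x 0) ^ 2 + W (x 0, x 1)) x =
    x 2 * ((1 + 2 * (x 1) ^ 2) * fderiv ℝ V (x 0, x 1) (1, 0)
        + 2 * x 0 * x 1 * fderiv ℝ V (x 0, x 1) (0, 1) - fderiv ℝ W (x 0, x 1) (1, 0))
    + x 3 * ((1 + 2 * (x 0) ^ 2) * fderiv ℝ V (x 0, x 1) (0, 1)
        + 2 * x 0 * x 1 * fderiv ℝ V (x 0, x 1) (1, 0) + fderiv ℝ W (x 0, x 1) (0, 1)) := by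
  have p : ∀ i : Fin 4, HasFDerivAt (fun x : Fin 4 → ℝ => x i)
      (proj i : (Fin 4 → ℝ) →L[ℝ] ℝ) x := fun i => hasFDerivAt_apply i x
  have hπ : HasFDerivAt (fun x : Fin 4 → ℝ => (x 0, x 1))
      ((proj 0 : (Fin 4 → ℝ) →L[ℝ] ℝ).prod (proj 1)) x := HasFDerivAt.prodMk (p 0) (p 1)
  have hVd : HasFDerivAt (fun x : Fin 4 → ℝ => V (x 0, x 1))
      ((fderiv ℝ V (x 0, x 1)).comp ((proj 0 : (Fin 4 → ℝ) →L[ℝ] ℝ).prod (proj 1))) x :=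
    ((hV.differentiable one_ne_zero (x 0, x 1)).hasFDerivAt).comp x hπ
  have hWd : HasFDerivAt (fun x : Fin 4 → ℝ => W (x 0, x 1))
      ((fderiv ℝ W (x 0, x 1)).comp ((proj 0 : (Fin 4 → ℝ) →L[ℝ] ℝ).prod (proj 1))) x :=
    ((hW.differentiable one_ne_zero (x 0, x 1)).hasFDerivAt).comp x hπ
  have hS := ((p 2).mul (p 1)).add ((p 3).mul (p 0))
  have hH := ((((p 2).mul (p 2)).add ((p 0).mul (p 0))).mul_const (2:ℝ)⁻¹ |>.sub
      ((((p 3).mul (p 3)).add ((p 1).mul (p 1))).mul_const (2:ℝ)⁻¹) |>.add hVd)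
  have hG := ((((p 2).mul (p 2)).add ((p 0).mul (p 0)) |>.add ((p 3).mul (p 3))
      |>.add ((p 1).mul (p 1))).mul_const (2:ℝ)⁻¹ |>.add (hS.mul hS) |>.add hWd)
  simp only [pow_two, div_eq_mul_inv]
  rw [poissonBracket]; erw [hH.fderiv, hG.fderiv]
  simp only [ContinuousLinearMap.add_apply, ContinuousLinearMap.sub_apply,
    ContinuousLinearMap.smul_apply, ContinuousLinearMap.coe_comp', Function.comp_apply,
    ContinuousLinearMap.prod_apply, ContinuousLinearMap.proj_apply, Pi.single_apply,
    smul_eq_mul]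
  simp (config := { decide := true }) [Fin.ext_iff, Prod.mk_zero_zero, map_zero]
  ring

/-- For `H = h₁ − h₂ + V(q)` and `G = h₁ + h₂ + (p₁q₂ + p₂q₁)² + W(q)`,
`{H,G} = 0` identically iff `W` satisfies
`∂₁W = (1 + 2q₂²)∂₁V + 2q₁q₂∂₂V` and `−∂₂W = (1 + 2q₁²)∂₂V + 2q₁q₂∂₁V`. -/
theorem first_integral_condition_iff_pde (V W : ℝ × ℝ → ℝ)
    (hV : ContDiff ℝ 1 V) (hW : ContDiff ℝ 1 W) :
    (∀ x : Fin 4 → ℝ,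
      poissonBracket
        (fun x => (x 2 ^ 2 + x 0 ^ 2) / 2 - (x 3 ^ 2 + x 1 ^ 2) / 2 + V (x 0, x 1))
        (fun x => (x 2 ^ 2 + x 0 ^ 2 + x 3 ^ 2 + x 1 ^ 2) / 2
          + (x 2 * x 1 + x 3 * x 0) ^ 2 + W (x 0, x 1)) x = 0) ↔
    (∀ q : ℝ × ℝ,
      fderiv ℝ W q (1, 0)
          = (1 + 2 * q.2 ^ 2) * fderiv ℝ V q (1, 0) + 2 * q.1 * q.2 * fderiv ℝ V q (0, 1) ∧
      -fderiv ℝ W q (0, 1)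
          = (1 + 2 * q.1 ^ 2) * fderiv ℝ V q (0, 1) + 2 * q.1 * q.2 * fderiv ℝ V q (1, 0)) := by
  constructor
  · intro h q
    have h1 := h ![q.1, q.2, 1, 0]
    have h2 := h ![q.1, q.2, 0, 1]
    rw [key V W hV hW] at h1 h2
    simp [Matrix.cons_val_zero, Matrix.cons_val_one] at h1 h2
    constructor <;> linarith
  · intro h x
    rw [key V W hV hW]
    obtain ⟨h1, h2⟩ := h (x 0, x 1)
    dsimp only at h1 h2
    have e1 : (1 + 2 * (x 1) ^ 2) * fderiv ℝ V (x 0, x 1) (1, 0)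
        + 2 * x 0 * x 1 * fderiv ℝ V (x 0, x 1) (0, 1) - fderiv ℝ W (x 0, x 1) (1, 0) = 0 := by
      linarith
    have e2 : (1 + 2 * (x 0) ^ 2) * fderiv ℝ V (x 0, x 1) (0, 1)
        + 2 * x 0 * x 1 * fderiv ℝ V (x 0, x 1) (1, 0) + fderiv ℝ W (x 0, x 1) (0, 1) = 0 := by
      linarith
    rw [e1, e2]
    ring
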